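/- Local sensitivity of constrained estimators (Proposition 1): Let L : ℝ^p × ℝ^q × ℝ^r → ℝ and F : ℝ^p × ℝ^q × ℝ^r → ℝ^q be twice continuously differentiable, and let θ : ℝ^r → ℝ^p, V : ℝ^r → ℝ^q, λ : ℝ^r → ℝ^q be differentiable functions such that for every γ ∈ ℝ^r the following first-order (KKT) conditions hold at the point (θ(γ), V(γ), γ): (i) ∂L/∂θ_i = Σ_{m=1}^q λ_m(γ) · ∂F_m/∂θ_i for every i = 1,…,p; (ii) ∂L/∂V_k + λ_k(γ) − Σ_{m=1}^q λ_m(γ) · ∂F_m/∂V_k = 0 for every k = 1,…,q; (iii) V(γ) = F(θ(γ), V(γ), γ). Then for every γ the Jacobian matrices Dθ(γ) ∈ ℝ^{p×r}, DV(γ) ∈ ℝ^{q×r}, Dλ(γ) ∈ ℝ^{q×r} satisfy the linear system: A_{θ,θ}·Dθ(γ) + A_{θ,V}·DV(γ) − (D_θF)ᵀ·Dλ(γ) = −A_{θ,γ}; A_{V,θ}·Dθ(γ) + A_{V,V}·DV(γ) + (I_q − D_VF)ᵀ·Dλ(γ) = −A_{V,γ}; (D_θF)·Dθ(γ) + (D_VF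 − I_q)·DV(γ) = −D_γF; where for symbols x ∈ {θ, V} and y ∈ {θ, V, γ}, A_{x,y} denotes the matrix whose (i,j) entry is ∂²L/∂x_i∂y_j − Σ_{m=1}^q λ_m(γ) · ∂²F_m/∂x_i∂y_j, and all partial derivatives of L and F are evaluated at (θ(γ), V(γ), γ). -/

import Mathlib

open Matrix

private lemma sum_single_smul' {n : ℕ} (a : Fin n → ℝ) :
    ∑ i, a i • (Pi.single i 1 : Fin n → ℝ) = a := by
  have h : ∀ i : Fin n, a i • (Pi.single i 1 : Fin n → ℝ)
      = (Pi.single i (a i) : Fin n → ℝ) := by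
    intro i; funext x
    simp [Pi.single_apply]
  simp only [h, Finset.univ_sum_single]

private lemma clm_decomp {p q r : ℕ} {X : Type*} [NormedAddCommGroup X] [NormedSpace ℝ X]
    (T : ((Fin p → ℝ) × (Fin q → ℝ) × (Fin r → ℝ)) →L[ℝ] X)
    (a : Fin p → ℝ) (b : Fin q → ℝ) (c : Fin r → ℝ) :
    T (a, b, c) = ∑ i, a i • T (Pi.single i 1, 0, 0)
      + ∑ k, b k • T (0, Pi.single k 1, 0)
      + ∑ j, c j • T (0, 0, Pi.single j 1) := by
  have h1 : (a, b, c) = ((a, 0, 0) : (Fin p → ℝ) × (Fin q → ℝ) × (Fin r → ℝ))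
      + (0, b, 0) + (0, 0, c) := by
    simp [Prod.ext_iff]
  have ha : ((a, 0, 0) : (Fin p → ℝ) × (Fin q → ℝ) × (Fin r → ℝ))
      = ∑ i, a i • ((Pi.single i 1 : Fin p → ℝ), (0 : Fin q → ℝ), (0 : Fin r → ℝ)) := by
    refine Prod.ext ?_ (Prod.ext ?_ ?_) <;>
      simp [Prod.fst_sum, Prod.snd_sum, sum_single_smul']
  have hb : ((0, b, 0) : (Fin p → ℝ) × (Fin q → ℝ) × (Fin r → ℝ))
      = ∑ k, b k • ((0 : Fin p → ℝ), (Pi.single k 1 : Fin q → ℝ), (0 : Fin r → ℝ)) := by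
    refine Prod.ext ?_ (Prod.ext ?_ ?_) <;>
      simp [Prod.fst_sum, Prod.snd_sum, sum_single_smul']
  have hc : ((0, 0, c) : (Fin p → ℝ) × (Fin q → ℝ) × (Fin r → ℝ))
      = ∑ j, c j • ((0 : Fin p → ℝ), (0 : Fin q → ℝ), (Pi.single j 1 : Fin r → ℝ)) := by
    refine Prod.ext ?_ (Prod.ext ?_ ?_) <;>
      simp [Prod.fst_sum, Prod.snd_sum, sum_single_smul']
  rw [h1, map_add, map_add, ha, hb, hc, map_sum, map_sum, map_sum]
  simp only [_root_.map_smul]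

private lemma fderiv_eval_comp {Y E X : Type*}
    [NormedAddCommGroup Y] [NormedSpace ℝ Y]
    [NormedAddCommGroup E] [NormedSpace ℝ E]
    [NormedAddCommGroup X] [NormedSpace ℝ X]
    {f : E → X} (hf : ContDiff ℝ 2 f) {G : Y → E} (hG : Differentiable ℝ G)
    (v : E) (γ : Y) :
    fderiv ℝ (fun γ' => fderiv ℝ f (G γ') v) γ
      = ((fderiv ℝ (fderiv ℝ f) (G γ)).comp (fderiv ℝ G γ)).flip v := by
  have hdf : Differentiable ℝ (fderiv ℝ f) :=
    (hf.fderiv_right (m := 1) (by norm_num)).differentiable one_ne_zero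
  have hc : DifferentiableAt ℝ (fun γ' => fderiv ℝ f (G γ')) γ :=
    (hdf (G γ)).comp γ (hG γ)
  have hcomp : fderiv ℝ (fun γ' => fderiv ℝ f (G γ')) γ
      = (fderiv ℝ (fderiv ℝ f) (G γ)).comp (fderiv ℝ G γ) :=
    fderiv_comp γ (hdf (G γ)) (hG γ)
  rw [fderiv_clm_apply hc (differentiableAt_const v), fderiv_fun_const]
  simp [hcomp]

private lemma diff_pi_comp {Y : Type*} [NormedAddCommGroup Y] [NormedSpace ℝ Y] {n : ℕ}
    {g : Y → (Fin n → ℝ)} {γ : Y} (hg : DifferentiableAt ℝ g γ) (m : Fin n) :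
    DifferentiableAt ℝ (fun y => g y m) γ :=
  ((ContinuousLinearMap.proj (R := ℝ) (φ := fun _ : Fin n => ℝ) m).differentiableAt).comp γ hg

private lemma fderiv_pi_comp {Y : Type*} [NormedAddCommGroup Y] [NormedSpace ℝ Y] {n : ℕ}
    {g : Y → (Fin n → ℝ)} {γ : Y} (hg : DifferentiableAt ℝ g γ) (m : Fin n) (u : Y) :
    fderiv ℝ (fun y => g y m) γ u = fderiv ℝ g γ u m := by
  have h := fderiv_comp γ
    (ContinuousLinearMap.proj (R := ℝ) (φ := fun _ : Fin n => ℝ) m).differentiableAt hg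
  simp only [ContinuousLinearMap.fderiv] at h
  have h2 : fderiv ℝ (fun y => g y m) γ
      = (ContinuousLinearMap.proj (R := ℝ) (φ := fun _ : Fin n => ℝ) m).comp (fderiv ℝ g γ) := h
  rw [h2]; rfl

private lemma sum_swap_mul {α β : Type*} [Fintype α] [Fintype β]
    (lamv : β → ℝ) (B : α → β → ℝ) (d : α → ℝ) :
    ∑ k, (∑ m, lamv m * B k m) * d k = ∑ m, lamv m * ∑ k, B k m * d k := by
  simp only [Finset.sum_mul, Finset.mul_sum]
  rw [Finset.sum_comm]
  apply Finset.sum_congr rfl; intro m _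
  apply Finset.sum_congr rfl; intro k _
  ring

set_option maxHeartbeats 2000000 in
theorem stmt_0 (p q r : ℕ)
    (L : ((Fin p → ℝ) × (Fin q → ℝ) × (Fin r → ℝ)) → ℝ)
    (F : ((Fin p → ℝ) × (Fin q → ℝ) × (Fin r → ℝ)) → (Fin q → ℝ))
    (hL : ContDiff ℝ 2 L) (hF : ContDiff ℝ 2 F)
    (θ : (Fin r → ℝ) → (Fin p → ℝ))
    (V : (Fin r → ℝ) → (Fin q → ℝ))
    (lam : (Fin r → ℝ) → (Fin q → ℝ))
    (hθ : Differentiable ℝ θ) (hV : Differentiable ℝ V) (hlam : Differentiable ℝ lam)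
    (hKKT1 : ∀ (γ : Fin r → ℝ) (i : Fin p),
      fderiv ℝ L (θ γ, V γ, γ) ((Pi.single i 1 : Fin p → ℝ), 0, 0)
        = ∑ m : Fin q, lam γ m
            * fderiv ℝ F (θ γ, V γ, γ) ((Pi.single i 1 : Fin p → ℝ), 0, 0) m)
    (hKKT2 : ∀ (γ : Fin r → ℝ) (k : Fin q),
      fderiv ℝ L (θ γ, V γ, γ) (0, (Pi.single k 1 : Fin q → ℝ), 0) + lam γ k
        - ∑ m : Fin q, lam γ m
            * fderiv ℝ F (θ γ, V γ, γ) (0, (Pi.single k 1 : Fin q → ℝ), 0) m = 0)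
    (hKKT3 : ∀ γ : Fin r → ℝ, V γ = F (θ γ, V γ, γ))
    (γ : Fin r → ℝ) :
    let E := (Fin p → ℝ) × (Fin q → ℝ) × (Fin r → ℝ)
    let z : E := (θ γ, V γ, γ)
    let eθ : Fin p → E := fun i => ((Pi.single i 1 : Fin p → ℝ), 0, 0)
    let eV : Fin q → E := fun k => (0, (Pi.single k 1 : Fin q → ℝ), 0)
    let eγ : Fin r → E := fun j => (0, 0, (Pi.single j 1 : Fin r → ℝ))
    let D2L : E → E → ℝ := fun v w => fderiv ℝ (fun z' => fderiv ℝ L z' v) z w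
    let D2F : E → E → Fin q → ℝ := fun v w => fderiv ℝ (fun z' => fderiv ℝ F z' v) z w
    let Aθθ : Matrix (Fin p) (Fin p) ℝ := Matrix.of fun i k =>
      D2L (eθ i) (eθ k) - ∑ m : Fin q, lam γ m * D2F (eθ i) (eθ k) m
    let AθV : Matrix (Fin p) (Fin q) ℝ := Matrix.of fun i k =>
      D2L (eθ i) (eV k) - ∑ m : Fin q, lam γ m * D2F (eθ i) (eV k) m
    let Aθγ : Matrix (Fin p) (Fin r) ℝ := Matrix.of fun i j =>
      D2L (eθ i) (eγ j) - ∑ m : Fin q, lam γ m * D2F (eθ i) (eγ j) m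
    let AVθ : Matrix (Fin q) (Fin p) ℝ := Matrix.of fun k i =>
      D2L (eV k) (eθ i) - ∑ m : Fin q, lam γ m * D2F (eV k) (eθ i) m
    let AVV : Matrix (Fin q) (Fin q) ℝ := Matrix.of fun k l =>
      D2L (eV k) (eV l) - ∑ m : Fin q, lam γ m * D2F (eV k) (eV l) m
    let AVγ : Matrix (Fin q) (Fin r) ℝ := Matrix.of fun k j =>
      D2L (eV k) (eγ j) - ∑ m : Fin q, lam γ m * D2F (eV k) (eγ j) m
    let DθF : Matrix (Fin q) (Fin p) ℝ := Matrix.of fun m i => fderiv ℝ F z (eθ i) m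
    let DVF : Matrix (Fin q) (Fin q) ℝ := Matrix.of fun m k => fderiv ℝ F z (eV k) m
    let DγF : Matrix (Fin q) (Fin r) ℝ := Matrix.of fun m j => fderiv ℝ F z (eγ j) m
    let Dθ : Matrix (Fin p) (Fin r) ℝ := Matrix.of fun i j =>
      fderiv ℝ θ γ (Pi.single j 1) i
    let DV : Matrix (Fin q) (Fin r) ℝ := Matrix.of fun k j =>
      fderiv ℝ V γ (Pi.single j 1) k
    let Dlam : Matrix (Fin q) (Fin r) ℝ := Matrix.of fun k j =>
      fderiv ℝ lam γ (Pi.single j 1) k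
    Aθθ * Dθ + AθV * DV - DθFᵀ * Dlam = -Aθγ ∧
    AVθ * Dθ + AVV * DV + (1 - DVF)ᵀ * Dlam = -AVγ ∧
    DθF * Dθ + (DVF - 1) * DV = -DγF := by
  intro E z eθ eV eγ D2L D2F Aθθ AθV Aθγ AVθ AVV AVγ DθF DVF DγF Dθ DV Dlam
  set G : (Fin r → ℝ) → E := fun γ' => (θ γ', V γ', γ') with hGdef
  have hG : Differentiable ℝ G := hθ.prodMk (hV.prodMk differentiable_id)
  have hF1 : Differentiable ℝ F := hF.differentiable (by norm_num)
  have hDL : Differentiable ℝ (fderiv ℝ L) :=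
    (hL.fderiv_right (m := 1) (by norm_num)).differentiable one_ne_zero
  have hDF : Differentiable ℝ (fderiv ℝ F) :=
    (hF.fderiv_right (m := 1) (by norm_num)).differentiable one_ne_zero
  have hGder : ∀ u : Fin r → ℝ, fderiv ℝ G γ u
      = (fderiv ℝ θ γ u, fderiv ℝ V γ u, u) := by
    intro u
    have h1 : HasFDerivAt G ((fderiv ℝ θ γ).prod
        ((fderiv ℝ V γ).prod (ContinuousLinearMap.id ℝ _))) γ :=
      ((hθ γ).hasFDerivAt.prodMk ((hV γ).hasFDerivAt.prodMk (hasFDerivAt_id γ)))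
    rw [h1.fderiv]; rfl
  set H : E →L[ℝ] E →L[ℝ] ℝ := fderiv ℝ (fderiv ℝ L) z with hHdef
  set HF : E →L[ℝ] E →L[ℝ] (Fin q → ℝ) := fderiv ℝ (fderiv ℝ F) z with hHFdef
  -- second-derivative conversions
  have hD2L : ∀ v w : E, fderiv ℝ (fun z' => fderiv ℝ L z' v) z w = H w v := by
    intro v w
    have h := fderiv_eval_comp (f := L) hL (G := fun x : E => x) differentiable_id v z
    have h2 : fderiv ℝ (fun z' => fderiv ℝ L z' v) z
        = ((fderiv ℝ (fderiv ℝ L) z).comp (fderiv ℝ (fun x : E => x) z)).flip v := h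
    rw [h2, fderiv_id']
    rfl
  have hD2F : ∀ (v w : E) (m : Fin q),
      fderiv ℝ (fun z' => fderiv ℝ F z' v) z w m = HF w v m := by
    intro v w m
    have h := fderiv_eval_comp (f := F) hF (G := fun x : E => x) differentiable_id v z
    have h2 : fderiv ℝ (fun z' => fderiv ℝ F z' v) z
        = ((fderiv ℝ (fderiv ℝ F) z).comp (fderiv ℝ (fun x : E => x) z)).flip v := h
    rw [h2, fderiv_id']
    rfl
  -- differentiability of building blocks
  have hΦdiff : ∀ v : E, DifferentiableAt ℝ (fun γ' => fderiv ℝ L (G γ') v) γ :=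
    fun v => DifferentiableAt.clm_apply ((hDL (G γ)).comp γ (hG γ)) (differentiableAt_const v)
  have hΨvdiff : ∀ v : E, DifferentiableAt ℝ (fun γ' => fderiv ℝ F (G γ') v) γ :=
    fun v => DifferentiableAt.clm_apply ((hDF (G γ)).comp γ (hG γ)) (differentiableAt_const v)
  have hΨdiff : ∀ (v : E) (m : Fin q),
      DifferentiableAt ℝ (fun γ' => fderiv ℝ F (G γ') v m) γ :=
    fun v m => diff_pi_comp (hΨvdiff v) m
  have hlamdiff : ∀ m : Fin q, DifferentiableAt ℝ (fun γ' => lam γ' m) γ :=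
    fun m => diff_pi_comp (hlam γ) m
  -- derivative values of building blocks
  have hΦder : ∀ (v : E) (u : Fin r → ℝ),
      fderiv ℝ (fun γ' => fderiv ℝ L (G γ') v) γ u = H (fderiv ℝ G γ u) v := by
    intro v u
    rw [fderiv_eval_comp hL hG v γ]
    rfl
  have hΨder : ∀ (v : E) (m : Fin q) (u : Fin r → ℝ),
      fderiv ℝ (fun γ' => fderiv ℝ F (G γ') v m) γ u = HF (fderiv ℝ G γ u) v m := by
    intro v m u
    rw [fderiv_pi_comp (g := fun γ' => fderiv ℝ F (G γ') v) (hΨvdiff v) m u,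
        fderiv_eval_comp hF hG v γ]
    rfl
  have hlamder : ∀ (m : Fin q) (u : Fin r → ℝ),
      fderiv ℝ (fun γ' => lam γ' m) γ u = fderiv ℝ lam γ u m :=
    fun m u => fderiv_pi_comp (hlam γ) m u
  -- expansion lemmas
  have expandH : ∀ (v : E) (j : Fin r),
      H (fderiv ℝ G γ (Pi.single j 1)) v
        = ∑ k, H (eθ k) v * fderiv ℝ θ γ (Pi.single j 1) k
          + ∑ l, H (eV l) v * fderiv ℝ V γ (Pi.single j 1) l
          + H (eγ j) v := by
    intro v j
    rw [hGder, clm_decomp H]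
    simp only [ContinuousLinearMap.coe_sum', Finset.sum_apply,
      ContinuousLinearMap.coe_smul', Pi.smul_apply, ContinuousLinearMap.add_apply,
      smul_eq_mul, Pi.add_apply]
    congr 1
    · congr 1 <;> (apply Finset.sum_congr rfl; intro k _; ring)
    · simp [Pi.single_apply]; rfl
  have expandHF : ∀ (v : E) (j : Fin r) (m : Fin q),
      HF (fderiv ℝ G γ (Pi.single j 1)) v m
        = ∑ k, HF (eθ k) v m * fderiv ℝ θ γ (Pi.single j 1) k
          + ∑ l, HF (eV l) v m * fderiv ℝ V γ (Pi.single j 1) l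
          + HF (eγ j) v m := by
    intro v j m
    rw [hGder, clm_decomp HF]
    simp only [ContinuousLinearMap.coe_sum', Finset.sum_apply,
      ContinuousLinearMap.coe_smul', Pi.smul_apply, ContinuousLinearMap.add_apply,
      smul_eq_mul, Pi.add_apply]
    congr 1
    · congr 1 <;> (apply Finset.sum_congr rfl; intro k _; ring)
    · simp [Pi.single_apply]; rfl
  have expandF : ∀ (j : Fin r) (m : Fin q),
      fderiv ℝ F z (fderiv ℝ G γ (Pi.single j 1)) m
        = ∑ k, fderiv ℝ F z (eθ k) m * fderiv ℝ θ γ (Pi.single j 1) k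
          + ∑ l, fderiv ℝ F z (eV l) m * fderiv ℝ V γ (Pi.single j 1) l
          + fderiv ℝ F z (eγ j) m := by
    intro j m
    rw [hGder, clm_decomp (fderiv ℝ F z)]
    simp only [Pi.add_apply, Finset.sum_apply, Pi.smul_apply, smul_eq_mul]
    congr 1
    · congr 1 <;> (apply Finset.sum_congr rfl; intro k _; ring)
    · simp [Pi.single_apply]; rfl
  -- KKT conditions restated via G
  have hKKT1' : ∀ (γ' : Fin r → ℝ) (i : Fin p),
      fderiv ℝ L (G γ') (eθ i) = ∑ m, lam γ' m * fderiv ℝ F (G γ') (eθ i) m :=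
    fun γ' i => hKKT1 γ' i
  have hKKT2' : ∀ (γ' : Fin r → ℝ) (k : Fin q),
      fderiv ℝ L (G γ') (eV k) + lam γ' k
        - ∑ m, lam γ' m * fderiv ℝ F (G γ') (eV k) m = 0 :=
    fun γ' k => hKKT2 γ' k
  have hKKT3' : ∀ γ' : Fin r → ℝ, V γ' = F (G γ') := fun γ' => hKKT3 γ'
  -- key identity 1
  have key1 : ∀ (i : Fin p) (j : Fin r),
      H (fderiv ℝ G γ (Pi.single j 1)) (eθ i)
        - ∑ m, (lam γ m * HF (fderiv ℝ G γ (Pi.single j 1)) (eθ i) m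
            + fderiv ℝ F z (eθ i) m * fderiv ℝ lam γ (Pi.single j 1) m) = 0 := by
    intro i j
    have hzero : (fun γ' => fderiv ℝ L (G γ') (eθ i)
        - ∑ m, lam γ' m * fderiv ℝ F (G γ') (eθ i) m) = fun _ => (0:ℝ) := by
      funext γ'; rw [hKKT1' γ' i, sub_self]
    have hdiffsum : DifferentiableAt ℝ
        (fun γ' => ∑ m, lam γ' m * fderiv ℝ F (G γ') (eθ i) m) γ :=
      DifferentiableAt.fun_sum (fun m _ => (hlamdiff m).fun_mul (hΨdiff (eθ i) m))
    have h0 : fderiv ℝ (fun γ' => fderiv ℝ L (G γ') (eθ i)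
        - ∑ m, lam γ' m * fderiv ℝ F (G γ') (eθ i) m) γ = 0 := by
      rw [hzero]; exact fderiv_const_apply 0
    rw [fderiv_fun_sub (hΦdiff (eθ i)) hdiffsum] at h0
    rw [fderiv_fun_sum (fun m _ => (hlamdiff m).fun_mul (hΨdiff (eθ i) m))] at h0
    have h0u := congrArg (fun (T : (Fin r → ℝ) →L[ℝ] ℝ) => T (Pi.single j 1)) h0
    simp only [ContinuousLinearMap.sub_apply, ContinuousLinearMap.sum_apply,
      ContinuousLinearMap.zero_apply] at h0u
    have hmul : ∀ m : Fin q,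
        fderiv ℝ (fun γ' => lam γ' m * fderiv ℝ F (G γ') (eθ i) m) γ (Pi.single j 1)
          = lam γ m * HF (fderiv ℝ G γ (Pi.single j 1)) (eθ i) m
            + fderiv ℝ F z (eθ i) m * fderiv ℝ lam γ (Pi.single j 1) m := by
      intro m
      rw [fderiv_fun_mul (hlamdiff m) (hΨdiff (eθ i) m)]
      simp only [ContinuousLinearMap.add_apply, ContinuousLinearMap.smul_apply,
        smul_eq_mul]
      rw [hΨder (eθ i) m, hlamder m]
    rw [hΦder (eθ i)] at h0u
    calc H (fderiv ℝ G γ (Pi.single j 1)) (eθ i)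
        - ∑ m, (lam γ m * HF (fderiv ℝ G γ (Pi.single j 1)) (eθ i) m
            + fderiv ℝ F z (eθ i) m * fderiv ℝ lam γ (Pi.single j 1) m)
        = H (fderiv ℝ G γ (Pi.single j 1)) (eθ i)
          - ∑ m, fderiv ℝ (fun γ' => lam γ' m * fderiv ℝ F (G γ') (eθ i) m) γ
              (Pi.single j 1) := by
          congr 1
          exact (Finset.sum_congr rfl (fun m _ => (hmul m).symm))
      _ = 0 := h0u
  -- key identity 2
  have key2 : ∀ (k : Fin q) (j : Fin r),
      H (fderiv ℝ G γ (Pi.single j 1)) (eV k) + fderiv ℝ lam γ (Pi.single j 1) k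
        - ∑ m, (lam γ m * HF (fderiv ℝ G γ (Pi.single j 1)) (eV k) m
            + fderiv ℝ F z (eV k) m * fderiv ℝ lam γ (Pi.single j 1) m) = 0 := by
    intro k j
    have hzero : (fun γ' => fderiv ℝ L (G γ') (eV k) + lam γ' k
        - ∑ m, lam γ' m * fderiv ℝ F (G γ') (eV k) m) = fun _ => (0:ℝ) := by
      funext γ'; exact hKKT2' γ' k
    have hdiffsum : DifferentiableAt ℝ
        (fun γ' => ∑ m, lam γ' m * fderiv ℝ F (G γ') (eV k) m) γ :=
      DifferentiableAt.fun_sum (fun m _ => (hlamdiff m).fun_mul (hΨdiff (eV k) m))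
    have h0 : fderiv ℝ (fun γ' => fderiv ℝ L (G γ') (eV k) + lam γ' k
        - ∑ m, lam γ' m * fderiv ℝ F (G γ') (eV k) m) γ = 0 := by
      rw [hzero]; exact fderiv_const_apply 0
    rw [fderiv_fun_sub ((hΦdiff (eV k)).fun_add (hlamdiff k)) hdiffsum,
      fderiv_fun_add (hΦdiff (eV k)) (hlamdiff k),
      fderiv_fun_sum (fun m _ => (hlamdiff m).fun_mul (hΨdiff (eV k) m))] at h0
    have h0u := congrArg (fun (T : (Fin r → ℝ) →L[ℝ] ℝ) => T (Pi.single j 1)) h0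
    simp only [ContinuousLinearMap.sub_apply, ContinuousLinearMap.add_apply,
      ContinuousLinearMap.sum_apply, ContinuousLinearMap.zero_apply] at h0u
    have hmul : ∀ m : Fin q,
        fderiv ℝ (fun γ' => lam γ' m * fderiv ℝ F (G γ') (eV k) m) γ (Pi.single j 1)
          = lam γ m * HF (fderiv ℝ G γ (Pi.single j 1)) (eV k) m
            + fderiv ℝ F z (eV k) m * fderiv ℝ lam γ (Pi.single j 1) m := by
      intro m
      rw [fderiv_fun_mul (hlamdiff m) (hΨdiff (eV k) m)]
      simp only [ContinuousLinearMap.add_apply, ContinuousLinearMap.smul_apply,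
        smul_eq_mul]
      rw [hΨder (eV k) m, hlamder m]
    rw [hΦder (eV k), hlamder k] at h0u
    calc H (fderiv ℝ G γ (Pi.single j 1)) (eV k) + fderiv ℝ lam γ (Pi.single j 1) k
        - ∑ m, (lam γ m * HF (fderiv ℝ G γ (Pi.single j 1)) (eV k) m
            + fderiv ℝ F z (eV k) m * fderiv ℝ lam γ (Pi.single j 1) m)
        = H (fderiv ℝ G γ (Pi.single j 1)) (eV k) + fderiv ℝ lam γ (Pi.single j 1) k
          - ∑ m, fderiv ℝ (fun γ' => lam γ' m * fderiv ℝ F (G γ') (eV k) m) γ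
              (Pi.single j 1) := by
          congr 1
          exact (Finset.sum_congr rfl (fun m _ => (hmul m).symm))
      _ = 0 := h0u
  -- key identity 3
  have key3 : ∀ (m : Fin q) (j : Fin r),
      fderiv ℝ V γ (Pi.single j 1) m
        = fderiv ℝ F z (fderiv ℝ G γ (Pi.single j 1)) m := by
    intro m j
    have hzero : (fun γ' => F (G γ') m - V γ' m) = fun _ => (0:ℝ) := by
      funext γ'; rw [← hKKT3' γ', sub_self]
    have hdiffF : DifferentiableAt ℝ (fun γ' => F (G γ') m) γ :=
      diff_pi_comp ((hF1 (G γ)).comp γ (hG γ)) m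
    have hdiffV : DifferentiableAt ℝ (fun γ' => V γ' m) γ := diff_pi_comp (hV γ) m
    have h0 : fderiv ℝ (fun γ' => F (G γ') m - V γ' m) γ = 0 := by
      rw [hzero]; exact fderiv_const_apply 0
    rw [fderiv_fun_sub hdiffF hdiffV] at h0
    have h0u := congrArg (fun (T : (Fin r → ℝ) →L[ℝ] ℝ) => T (Pi.single j 1)) h0
    simp only [ContinuousLinearMap.sub_apply, ContinuousLinearMap.zero_apply] at h0u
    have hFm : fderiv ℝ (fun γ' => F (G γ') m) γ (Pi.single j 1)
        = fderiv ℝ F z (fderiv ℝ G γ (Pi.single j 1)) m := by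
      rw [fderiv_pi_comp (g := fun γ' => F (G γ')) ((hF1 (G γ)).comp γ (hG γ)) m]
      have hcomp : fderiv ℝ (fun γ' => F (G γ')) γ
          = (fderiv ℝ F (G γ)).comp (fderiv ℝ G γ) :=
        fderiv_comp γ (hF1 (G γ)) (hG γ)
      rw [hcomp]; rfl
    have hVm : fderiv ℝ (fun γ' => V γ' m) γ (Pi.single j 1)
        = fderiv ℝ V γ (Pi.single j 1) m := fderiv_pi_comp (hV γ) m _
    rw [hFm, hVm] at h0u
    linarith
  -- assemble the three matrix identities
  refine ⟨?_, ?_, ?_⟩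
  · ext i j
    have k1 := key1 i j
    rw [expandH (eθ i) j] at k1
    simp only [expandHF, expandF] at k1
    simp only [Aθθ, AθV, Aθγ, DθF, Dθ, DV, Dlam, D2L, D2F,
      Matrix.add_apply, Matrix.sub_apply, Matrix.neg_apply, Matrix.mul_apply,
      Matrix.transpose_apply, Matrix.of_apply]
    simp only [hD2L, hD2F]
    simp only [mul_add, Finset.sum_add_distrib] at k1
    simp only [sub_mul, Finset.sum_sub_distrib, sum_swap_mul]
    linarith
  · ext k j
    have k2 := key2 k j
    rw [expandH (eV k) j] at k2
    simp only [expandHF, expandF] at k2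
    simp only [AVθ, AVV, AVγ, DVF, Dθ, DV, Dlam, D2L, D2F,
      Matrix.add_apply, Matrix.sub_apply, Matrix.neg_apply, Matrix.mul_apply,
      Matrix.transpose_apply, Matrix.one_apply, Matrix.of_apply]
    simp only [hD2L, hD2F]
    simp only [mul_add, Finset.sum_add_distrib] at k2
    simp only [sub_mul, Finset.sum_sub_distrib, sum_swap_mul, ite_mul, one_mul,
      zero_mul, Finset.sum_ite_eq, Finset.sum_ite_eq', Finset.mem_univ, if_true]
    linarith
  · ext m j
    have k3 := key3 m j
    rw [expandF j m] at k3
    simp only [DθF, DVF, DγF, Dθ, DV,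
      Matrix.add_apply, Matrix.sub_apply, Matrix.neg_apply, Matrix.mul_apply,
      Matrix.one_apply, Matrix.of_apply]
    simp only [sub_mul, Finset.sum_sub_distrib, ite_mul, one_mul, zero_mul,
      Finset.sum_ite_eq, Finset.mem_univ, if_true]
    linarith
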